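/- Define D(m) = ∑_{i=−1}^{m−2} t_i t_{m−i−2}. Then D satisfies D(m) = D(m−3) + D(m−2) + D(m−1) + t_{m−1} for all m ≥ 4, where t are the Tribonacci numbers with t_{−2}=0, t_{−1}=t_0=1. -/
import Mathlib


/-- Tribonacci numbers shifted: `trib (m+2) = t_m` where `t_{-2}=0`, `t_{-1}=t_0=1`,
`t_m = t_{m-1} + t_{m-2} + t_{m-3}`. -/
def trib : ℕ → ℕ
  | 0 => 0
  | 1 => 1
  | 2 => 1
  | n + 3 => trib (n + 2) + trib (n + 1) + trib n

/-- `D m = ∑_{i=-1}^{m-2} t_i t_{m-i-2}` (with `t_i = trib (i+2)`). -/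
def D (m : ℕ) : ℕ :=
  ∑ j ∈ Finset.range m, trib (j + 1) * trib (m - j + 1)

lemma trib_add_three (x : ℕ) : trib (x + 3) = trib (x + 2) + trib (x + 1) + trib x := by
  rfl

/-- For all `m ≥ 4`, `D m = D (m-3) + D (m-2) + D (m-1) + t_{m-1}`. -/
theorem D_recurrence (m : ℕ) (hm : 4 ≤ m) :
    D m = D (m - 3) + D (m - 2) + D (m - 1) + trib (m + 1) := by
  obtain ⟨n, rfl⟩ : ∃ n, m = n + 4 := ⟨m - 4, by omega⟩
  have e1 : n + 4 - 3 = n + 1 := by omega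
  have e2 : n + 4 - 2 = n + 2 := by omega
  have e3 : n + 4 - 1 = n + 3 := by omega
  rw [e1, e2, e3]
  set SA := ∑ j ∈ Finset.range (n+2), trib (j+1) * trib (n+4-j) with hSA
  set SB := ∑ j ∈ Finset.range (n+2), trib (j+1) * trib (n+3-j) with hSB
  set SC := ∑ j ∈ Finset.range (n+2), trib (j+1) * trib (n+2-j) with hSC
  have hD4 : D (n+4) = SA + SB + SC + trib (n+4) + 2 * trib (n+3) := by
    rw [D, Finset.sum_range_succ, Finset.sum_range_succ]
    have h1 : n + 4 - (n + 2) + 1 = 3 := by omega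
    have h2 : n + 4 - (n + 3) + 1 = 2 := by omega
    have key : ∀ j ∈ Finset.range (n+2),
        trib (j+1) * trib (n + 4 - j + 1)
          = trib (j+1) * trib (n+4-j) + trib (j+1) * trib (n+3-j)
            + trib (j+1) * trib (n+2-j) := by
      intro j hj
      simp only [Finset.mem_range] at hj
      have hx : n + 4 - j + 1 = (n + 2 - j) + 3 := by omega
      have ha : n + 4 - j = (n + 2 - j) + 2 := by omega
      have hb : n + 3 - j = (n + 2 - j) + 1 := by omega
      rw [hx, trib_add_three, ha, hb, Nat.mul_add, Nat.mul_add]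
    rw [Finset.sum_congr rfl key, Finset.sum_add_distrib, Finset.sum_add_distrib,
      h1, h2]
    have : trib 3 = 2 := by decide
    rw [this]
    have : trib 2 = 1 := by decide
    rw [this]
    ring
  have hD3 : D (n+3) = SA + trib (n+3) := by
    rw [D, Finset.sum_range_succ]
    have h1 : n + 3 - (n + 2) + 1 = 2 := by omega
    have key : ∀ j ∈ Finset.range (n+2),
        trib (j+1) * trib (n + 3 - j + 1) = trib (j+1) * trib (n+4-j) := by
      intro j hj
      simp only [Finset.mem_range] at hj
      have : n + 3 - j + 1 = n + 4 - j := by omega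
      rw [this]
    rw [Finset.sum_congr rfl key, h1]
    have : trib 2 = 1 := by decide
    rw [this, Nat.mul_one]
  have hD2 : D (n+2) = SB := by
    rw [D]
    apply Finset.sum_congr rfl
    intro j hj
    simp only [Finset.mem_range] at hj
    have : n + 2 - j + 1 = n + 3 - j := by omega
    rw [this]
  have hD1 : SC = D (n+1) + trib (n+2) := by
    rw [D, hSC, Finset.sum_range_succ]
    have h1 : n + 2 - (n + 1) = 1 := by omega
    have key : ∀ j ∈ Finset.range (n+1),
        trib (j+1) * trib (n + 2 - j) = trib (j+1) * trib (n + 1 - j + 1) := by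
      intro j hj
      simp only [Finset.mem_range] at hj
      have : n + 2 - j = n + 1 - j + 1 := by omega
      rw [this]
    rw [Finset.sum_congr rfl key, h1]
    have : trib 1 = 1 := by decide
    rw [this, Nat.mul_one]
  have htr : trib (n + 4 + 1) = trib (n+4) + trib (n+3) + trib (n+2) := by
    have : n + 4 + 1 = (n + 2) + 3 := by omega
    rw [this, trib_add_three]
  omega
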